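/- Assume n ≥ 1. Let γ be a hook partition and let λ and μ be hook partitions each obtained from γ by adding a single box, say box b_λ for λ and box b_μ for μ. Then ⟨λ̄, λ̄ + 2ρ⟩ − ⟨μ̄, μ̄ + 2ρ⟩ = 2·c(b_λ) − 2·c(b_μ), where c denotes the content of a box. -/

import Mathlib

/-! Common definitions: the weight lattice `ℤ^{n+m}` is modeled as functions `ℕ → ℤ`
(only the coordinates `1, …, n+m` are relevant), with standard basis vectors `eps i`.
Index `i` has parity 0 if `i ≤ n` and parity 1 otherwise. -/

namespace TwoBoundary

/-- The standard basis vector `ε_i` of the weight lattice. -/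
def eps (i : ℕ) : ℕ → ℤ := fun k => if k = i then 1 else 0

/-- The sign of the positive root `ε_i − ε_j`: `+1` if it is even
(i.e. the parities of `i` and `j` agree), `−1` if it is odd. -/
def rootSign (n i j : ℕ) : ℤ := if (i ≤ n) = (j ≤ n) then 1 else -1

/-- `2ρ` = (sum of even positive roots) − (sum of odd positive roots). -/
def twoRho (n m : ℕ) : ℕ → ℤ :=
  ∑ i ∈ Finset.Icc 1 (n + m), ∑ j ∈ Finset.Icc 1 (n + m),
    if i < j then rootSign n i j • (eps i - eps j) else 0

/-- The bilinear form with `⟨ε_i, ε_j⟩ = (−1)^{parity i} δ_{ij}`. -/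
def form (n m : ℕ) (μ ν : ℕ → ℤ) : ℤ :=
  ∑ i ∈ Finset.Icc 1 (n + m), (if i ≤ n then (1 : ℤ) else -1) * (μ i * ν i)

/-- `φ_t = ε_1 + ⋯ + ε_t`. -/
def phi (t : ℕ) : ℕ → ℤ := fun k => if 1 ≤ k ∧ k ≤ t then 1 else 0

/-- `ψ_s = ε_{n+1} + ⋯ + ε_{n+s}`. -/
def psi (n s : ℕ) : ℕ → ℤ := fun k => if n + 1 ≤ k ∧ k ≤ n + s then 1 else 0

/-- A partition, given by its sequence of parts `λ_1 ≥ λ_2 ≥ ⋯` (the index-0 value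
is normalized to `0`): weakly decreasing with finitely many nonzero terms. -/
def IsPartition (lam : ℕ → ℕ) : Prop :=
  lam 0 = 0 ∧ (∀ i, 1 ≤ i → lam (i + 1) ≤ lam i) ∧ ∃ N, ∀ i, N ≤ i → lam i = 0

/-- A hook partition (relative to `(n, m)`): a partition with `λ_{n+1} ≤ m`. -/
def IsHookPartition (n m : ℕ) (lam : ℕ → ℕ) : Prop :=
  IsPartition lam ∧ lam (n + 1) ≤ m

/-- The weight `λ̄` associated to a hook partition `λ`:
`λ̄_i = λ_i` for `1 ≤ i ≤ n`, and `λ̄_{n+j} = #{k > n : λ_k ≥ j}` for `1 ≤ j ≤ m`. -/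
noncomputable def barWeight (n m : ℕ) (lam : ℕ → ℕ) : ℕ → ℤ := fun i =>
  if 1 ≤ i ∧ i ≤ n then (lam i : ℤ)
  else if n + 1 ≤ i ∧ i ≤ n + m then ({k : ℕ | n < k ∧ i - n ≤ lam k}.ncard : ℤ)
  else 0

/-- The set `𝒫₀` of partitions occurring in the decomposition of
`L((a^p)) ⊗ L((b^q))` (for `q ≤ p`), by the combinatorial description of
Okada and Stanley. -/
def InP0 (a b p q : ℕ) (lam : ℕ → ℕ) : Prop :=
  IsPartition lam ∧
  (∀ i, p + q < i → lam i = 0) ∧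
  (∀ i, 1 ≤ i → i ≤ q → lam i + lam (p + q + 1 - i) = a + b) ∧
  (∀ i, q + 1 ≤ i → i ≤ p → lam i = a) ∧
  (∀ i, 1 ≤ i → i ≤ q → max a b ≤ lam i)

/-! Auxiliary lemmas -/

lemma part_mono {lam : ℕ → ℕ} (h : IsPartition lam) {i j : ℕ} (h1 : 1 ≤ i) (h2 : i ≤ j) :
    lam j ≤ lam i := by
  induction j, h2 using Nat.le_induction with
  | base => exact le_refl _
  | succ k hk ih => exact le_trans (h.2.1 k (by omega)) ih

lemma sum_sgn (n t : ℕ) :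
    ∑ j ∈ Finset.Icc 1 t, (if j ≤ n then (1:ℤ) else -1) = 2 * ((min n t : ℕ) : ℤ) - t := by
  induction t with
  | zero => simp
  | succ t ih =>
    rw [Finset.sum_Icc_succ_top (by omega), ih]
    by_cases h : t + 1 ≤ n
    · rw [if_pos h, Nat.min_eq_right (by omega), Nat.min_eq_right (by omega)]
      push_cast; ring
    · rw [if_neg h, Nat.min_eq_left (by omega), Nat.min_eq_left (by omega)]
      push_cast; ring

lemma sum_sgn_Ioc (n k t : ℕ) (hk : 1 ≤ k) (h : k ≤ t) :
    ∑ j ∈ Finset.Ioc k t, (if j ≤ n then (1:ℤ) else -1)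
      = (2 * ((min n t : ℕ) : ℤ) - t) - (2 * ((min n k : ℕ) : ℤ) - k) := by
  have hsplit : Finset.Icc 1 k ∪ Finset.Ioc k t = Finset.Icc 1 t := by
    ext x; simp [Finset.mem_Icc, Finset.mem_Ioc]; omega
  have hdis : Disjoint (Finset.Icc 1 k) (Finset.Ioc k t) := by
    rw [Finset.disjoint_left]; intro a ha hb
    simp [Finset.mem_Icc] at ha; simp [Finset.mem_Ioc] at hb; omega
  have := Finset.sum_union hdis (f := fun j => (if j ≤ n then (1:ℤ) else -1))
  rw [hsplit, sum_sgn, sum_sgn] at this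
  linarith

lemma twoRho_apply (n m k : ℕ) (h1 : 1 ≤ k) (h2 : k ≤ n + m) :
    twoRho n m k = (if k ≤ n then (1:ℤ) else -1) *
      ((2 * ((min n (n+m) : ℕ) : ℤ) - (n+m)) - (2 * ((min n k : ℕ) : ℤ) - k)
        - (2 * ((min n (k-1) : ℕ) : ℤ) - ((k-1 : ℕ) : ℤ))) := by
  have hkmem : k ∈ Finset.Icc 1 (n+m) := by simp [Finset.mem_Icc]; omega
  have hexp : twoRho n m k = ∑ i ∈ Finset.Icc 1 (n+m), ∑ j ∈ Finset.Icc 1 (n+m),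
      (if i < j then rootSign n i j * (eps i k - eps j k) else 0) := by
    unfold twoRho
    rw [Finset.sum_apply]
    refine Finset.sum_congr rfl fun i _ => ?_
    rw [Finset.sum_apply]
    refine Finset.sum_congr rfl fun j _ => ?_
    split_ifs with h <;> simp [smul_eq_mul]
  have hrs : ∀ i j, rootSign n i j
      = (if i ≤ n then (1:ℤ) else -1) * (if j ≤ n then (1:ℤ) else -1) := by
    intro i j; unfold rootSign
    by_cases hi : i ≤ n <;> by_cases hj : j ≤ n <;> simp [hi, hj]
  rw [hexp]
  have hsplit : ∀ i j : ℕ, (if i < j then rootSign n i j * (eps i k - eps j k) else 0)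
      = (if i < j then rootSign n i j * eps i k else 0)
        - (if i < j then rootSign n i j * eps j k else 0) := by
    intro i j; split_ifs <;> ring
  simp only [hsplit]
  have hinner : ∀ i ∈ Finset.Icc 1 (n+m),
      (∑ j ∈ Finset.Icc 1 (n+m), ((if i < j then rootSign n i j * eps i k else 0)
        - (if i < j then rootSign n i j * eps j k else 0)))
      = (∑ j ∈ Finset.Icc 1 (n+m), (if i < j then rootSign n i j * eps i k else 0))
        - (∑ j ∈ Finset.Icc 1 (n+m), (if i < j then rootSign n i j * eps j k else 0)) :=
    fun i _ => Finset.sum_sub_distrib _ _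
  rw [Finset.sum_congr rfl hinner, Finset.sum_sub_distrib]
  have hS1 : (∑ i ∈ Finset.Icc 1 (n+m), ∑ j ∈ Finset.Icc 1 (n+m),
      (if i < j then rootSign n i j * eps i k else 0))
      = (if k ≤ n then (1:ℤ) else -1) *
        ((2 * ((min n (n+m) : ℕ) : ℤ) - (n+m)) - (2 * ((min n k : ℕ) : ℤ) - k)) := by
    rw [Finset.sum_eq_single_of_mem k hkmem]
    · have heps : eps k k = 1 := by simp [eps]
      simp only [heps, mul_one, hrs]
      have hif : ∀ j : ℕ, (if k < j then (if k ≤ n then (1:ℤ) else -1) *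
            (if j ≤ n then (1:ℤ) else -1) else 0)
          = (if k ≤ n then (1:ℤ) else -1) *
            (if k < j then (if j ≤ n then (1:ℤ) else -1) else 0) := by
        intro j; split_ifs <;> ring
      simp only [hif]
      rw [← Finset.mul_sum]
      congr 1
      rw [← Finset.sum_filter]
      have hfil : Finset.filter (fun j => k < j) (Finset.Icc 1 (n+m)) = Finset.Ioc k (n+m) := by
        ext j; simp [Finset.mem_Icc, Finset.mem_Ioc, Finset.mem_filter]; omega
      rw [hfil]
      exact sum_sgn_Ioc n k (n+m) h1 h2
    · intro i hi hne
      apply Finset.sum_eq_zero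
      intro j hj
      have : eps i k = 0 := by simp [eps]; omega
      rw [this]; split_ifs <;> ring
  have hS2 : (∑ i ∈ Finset.Icc 1 (n+m), ∑ j ∈ Finset.Icc 1 (n+m),
      (if i < j then rootSign n i j * eps j k else 0))
      = (if k ≤ n then (1:ℤ) else -1) *
        (2 * ((min n (k-1) : ℕ) : ℤ) - ((k-1 : ℕ) : ℤ)) := by
    have hin : ∀ i ∈ Finset.Icc 1 (n+m),
        (∑ j ∈ Finset.Icc 1 (n+m), (if i < j then rootSign n i j * eps j k else 0))
        = (if i < k then rootSign n i k else 0) := by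
      intro i _
      rw [Finset.sum_eq_single_of_mem k hkmem]
      · have heps : eps k k = 1 := by simp [eps]
        rw [heps, mul_one]
      · intro j hj hne
        have : eps j k = 0 := by simp [eps]; omega
        rw [this]; split_ifs <;> ring
    rw [Finset.sum_congr rfl hin]
    simp only [hrs]
    have hif : ∀ i : ℕ, (if i < k then (if i ≤ n then (1:ℤ) else -1) *
          (if k ≤ n then (1:ℤ) else -1) else 0)
        = (if k ≤ n then (1:ℤ) else -1) *
          (if i < k then (if i ≤ n then (1:ℤ) else -1) else 0) := by
      intro i; split_ifs <;> ring
    simp only [hif]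
    rw [← Finset.mul_sum]
    congr 1
    rw [← Finset.sum_filter]
    have hfil : Finset.filter (fun i => i < k) (Finset.Icc 1 (n+m)) = Finset.Icc 1 (k-1) := by
      ext i; simp [Finset.mem_Icc, Finset.mem_filter]; omega
    rw [hfil, sum_sgn]
  rw [hS1, hS2]; ring


lemma barWeight_lo (n m : ℕ) (lam : ℕ → ℕ) (i : ℕ) (h : 1 ≤ i ∧ i ≤ n) :
    barWeight n m lam i = (lam i : ℤ) := by unfold barWeight; rw [if_pos h]

lemma barWeight_hi (n m : ℕ) (lam : ℕ → ℕ) (i : ℕ) (h1 : n + 1 ≤ i) (h2 : i ≤ n + m) :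
    barWeight n m lam i = ({k : ℕ | n < k ∧ i - n ≤ lam k}.ncard : ℤ) := by
  unfold barWeight; rw [if_neg (by omega), if_pos ⟨h1, h2⟩]

lemma barWeight_out (n m : ℕ) (lam : ℕ → ℕ) (i : ℕ) (h1 : ¬(1 ≤ i ∧ i ≤ n))
    (h2 : ¬(n + 1 ≤ i ∧ i ≤ n + m)) : barWeight n m lam i = 0 := by
  unfold barWeight; rw [if_neg h1, if_neg h2]

lemma setA_finite {lam : ℕ → ℕ} (h : IsPartition lam) (n j : ℕ) (hj : 1 ≤ j) :
    {k : ℕ | n < k ∧ j ≤ lam k}.Finite := by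
  obtain ⟨N, hN⟩ := h.2.2
  apply Set.Finite.subset (Set.finite_Iio N)
  intro k hk
  simp only [Set.mem_setOf_eq] at hk
  simp only [Set.mem_Iio]
  by_contra hko
  push_neg at hko
  have := hN k hko
  omega

lemma form_diff (n m : ℕ) (g l : ℕ → ℤ) (i0 : ℕ) (h1 : 1 ≤ i0) (h2 : i0 ≤ n + m)
    (hl : ∀ i, l i = g i + eps i0 i) :
    form n m l (l + twoRho n m) - form n m g (g + twoRho n m)
      = (if i0 ≤ n then (1:ℤ) else -1) * (2 * g i0 + 1 + twoRho n m i0) := by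
  unfold form
  rw [← Finset.sum_sub_distrib]
  rw [Finset.sum_eq_single_of_mem i0 (by simp [Finset.mem_Icc]; omega)]
  · have he : eps i0 i0 = 1 := by simp [eps]
    simp only [Pi.add_apply, hl, he]
    ring
  · intro i hi hne
    have he : eps i0 i = 0 := by simp [eps, hne]
    simp only [Pi.add_apply, hl, he]
    ring

lemma box_step (n m : ℕ) (hn : 1 ≤ n) (gam lam : ℕ → ℕ)
    (hg : IsHookPartition n m gam) (hl : IsHookPartition n m lam)
    (r : ℕ) (hr : 1 ≤ r) (hbox : lam r = gam r + 1)
    (hoth : ∀ i, 1 ≤ i → i ≠ r → lam i = gam i) :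
    form n m (barWeight n m lam) (barWeight n m lam + twoRho n m)
      - form n m (barWeight n m gam) (barWeight n m gam + twoRho n m)
      = 2 * ((lam r : ℤ) - r) + ((n : ℤ) - m) := by
  by_cases hrn : r ≤ n
  · -- box added in a row among the first n rows
    have hlg : ∀ k, n < k → lam k = gam k := fun k hk => hoth k (by omega) (by omega)
    have ptwise : ∀ i, barWeight n m lam i = barWeight n m gam i + eps r i := by
      intro i
      by_cases hA : 1 ≤ i ∧ i ≤ n
      · rw [barWeight_lo n m lam i hA, barWeight_lo n m gam i hA]
        by_cases hir : i = r
        · subst hir; simp [eps, hbox]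
        · rw [hoth i hA.1 hir]; simp [eps, hir]
      · by_cases hB : n + 1 ≤ i ∧ i ≤ n + m
        · rw [barWeight_hi n m lam i hB.1 hB.2, barWeight_hi n m gam i hB.1 hB.2]
          have hset : {k : ℕ | n < k ∧ i - n ≤ lam k} = {k : ℕ | n < k ∧ i - n ≤ gam k} := by
            ext k; simp only [Set.mem_setOf_eq]
            exact and_congr_right (fun a => by rw [hlg k a])
          rw [hset]
          have he : eps r i = 0 := by simp [eps]; omega
          rw [he, add_zero]
        · rw [barWeight_out n m lam i hA hB, barWeight_out n m gam i hA hB]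
          have he : eps r i = 0 := by simp [eps]; omega
          rw [he, add_zero]
    rw [form_diff n m _ _ r hr (by omega) ptwise,
        twoRho_apply n m r hr (by omega), if_pos hrn,
        barWeight_lo n m gam r ⟨hr, hrn⟩,
        Nat.min_eq_left (Nat.le_add_right n m), Nat.min_eq_right hrn,
        Nat.min_eq_right (by omega : r - 1 ≤ n), hbox]
    push_cast
    omega
  · -- box added below row n: it moves in the transposed region
    push_neg at hrn
    set c := lam r with hc
    have hc1 : 1 ≤ c := by omega
    have hcm : c ≤ m := le_trans (part_mono hl.1 (by omega) (by omega)) hl.2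
    have hgr : gam r = c - 1 := by omega
    have hr2 : 2 ≤ r := by omega
    -- the set of rows (below n) of gamma with at least c boxes is Ioc n (r-1)
    have hsetg : {k : ℕ | n < k ∧ c ≤ gam k} = Set.Ioc n (r - 1) := by
      ext k
      simp only [Set.mem_setOf_eq, Set.mem_Ioc]
      constructor
      · rintro ⟨a, b⟩
        refine ⟨a, ?_⟩
        by_contra hklt
        push_neg at hklt
        have := part_mono hg.1 hr (by omega : r ≤ k)
        omega
      · rintro ⟨a, b⟩
        refine ⟨a, ?_⟩
        have h1 : gam (r-1) ≤ gam k := part_mono hg.1 (by omega) b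
        have h2 : gam (r-1) = lam (r-1) := (hoth (r-1) (by omega) (by omega)).symm
        have h3 : lam r ≤ lam (r-1) := part_mono hl.1 (by omega) (by omega)
        omega
    have hncard : {k : ℕ | n < k ∧ c ≤ gam k}.ncard = r - 1 - n := by
      rw [hsetg, Set.ncard_eq_toFinset_card']
      simp
    have ptwise : ∀ i, barWeight n m lam i = barWeight n m gam i + eps (n + c) i := by
      intro i
      by_cases hA : 1 ≤ i ∧ i ≤ n
      · rw [barWeight_lo n m lam i hA, barWeight_lo n m gam i hA,
            hoth i hA.1 (by omega)]
        have he : eps (n+c) i = 0 := by simp [eps]; omega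
        rw [he, add_zero]
      · by_cases hB : n + 1 ≤ i ∧ i ≤ n + m
        · rw [barWeight_hi n m lam i hB.1 hB.2, barWeight_hi n m gam i hB.1 hB.2]
          by_cases hic : i = n + c
          · subst hic
            have hin : n + c - n = c := by omega
            rw [hin]
            have hsetl : {k : ℕ | n < k ∧ c ≤ lam k}
                = insert r {k : ℕ | n < k ∧ c ≤ gam k} := by
              ext k
              simp only [Set.mem_setOf_eq, Set.mem_insert_iff]
              constructor
              · rintro ⟨a, b⟩
                by_cases hkr : k = r
                · exact Or.inl hkr
                · exact Or.inr ⟨a, by rwa [hoth k (by omega) hkr] at b⟩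
              · rintro (hkr | ⟨a, b⟩)
                · subst hkr; exact ⟨hrn, le_refl _⟩
                · refine ⟨a, ?_⟩
                  have hkr : k ≠ r := by intro h; rw [h] at b; omega
                  rwa [hoth k (by omega) hkr]
            have hnm : r ∉ {k : ℕ | n < k ∧ c ≤ gam k} := by
              simp only [Set.mem_setOf_eq]; omega
            rw [hsetl, Set.ncard_insert_of_notMem hnm (setA_finite hg.1 n c hc1)]
            have he : eps (n+c) (n+c) = 1 := by simp [eps]
            rw [he]; push_cast; ring
          · have hset : {k : ℕ | n < k ∧ i - n ≤ lam k}
                = {k : ℕ | n < k ∧ i - n ≤ gam k} := by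
              ext k
              simp only [Set.mem_setOf_eq]
              refine and_congr_right (fun a => ?_)
              by_cases hkr : k = r
              · subst hkr; omega
              · rw [hoth k (by omega) hkr]
            rw [hset]
            have he : eps (n+c) i = 0 := by simp [eps, hic]
            rw [he, add_zero]
        · rw [barWeight_out n m lam i hA hB, barWeight_out n m gam i hA hB]
          have he : eps (n+c) i = 0 := by simp [eps]; omega
          rw [he, add_zero]
    rw [form_diff n m _ _ (n + c) (by omega) (by omega) ptwise,
        twoRho_apply n m (n + c) (by omega) (by omega), if_neg (by omega),
        barWeight_hi n m gam (n + c) (by omega) (by omega)]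
    have hin : n + c - n = c := by omega
    rw [hin, hncard,
        Nat.min_eq_left (Nat.le_add_right n m), Nat.min_eq_left (by omega : n ≤ n + c),
        Nat.min_eq_left (by omega : n ≤ n + c - 1)]
    push_cast
    omega

/-- if the hook partitions `λ` and `μ` are each obtained from the hook
partition `γ` by adding a single box (`b_λ = (rl, λ_{rl})` and `b_μ = (rm, μ_{rm})`), then
`⟨λ̄, λ̄+2ρ⟩ − ⟨μ̄, μ̄+2ρ⟩ = 2·c(b_λ) − 2·c(b_μ)`. -/
theorem form_barWeight_diff_two_added_boxes (n m : ℕ) (hn : 1 ≤ n)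
    (gam lam mu : ℕ → ℕ)
    (hgam : IsHookPartition n m gam) (hlam : IsHookPartition n m lam)
    (hmu : IsHookPartition n m mu)
    (rl rm : ℕ) (hrl : 1 ≤ rl) (hrm : 1 ≤ rm)
    (hlbox : lam rl = gam rl + 1) (hlother : ∀ i, 1 ≤ i → i ≠ rl → lam i = gam i)
    (hmbox : mu rm = gam rm + 1) (hmother : ∀ i, 1 ≤ i → i ≠ rm → mu i = gam i) :
    form n m (barWeight n m lam) (barWeight n m lam + twoRho n m)
      - form n m (barWeight n m mu) (barWeight n m mu + twoRho n m)
      = 2 * ((lam rl : ℤ) - rl) - 2 * ((mu rm : ℤ) - rm) := by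
  have h1 := box_step n m hn gam lam hgam hlam rl hrl hlbox hlother
  have h2 := box_step n m hn gam mu hgam hmu rm hrm hmbox hmother
  linarith

end TwoBoundary
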